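/- If p ≥ 1 then ψ_p(x) := exp(x^p) − 1 is an Orlicz function. Moreover, for every 0 < p < 1 there exists an Orlicz function ψ̃_p such that for every real random variable X: ‖X‖_{ψ̃_p} ≤ ‖X‖_{ψ_p} ≤ C_{ψ_p} ‖X‖_{ψ̃_p}, where C_{ψ_p} := e^{−1} (e/(p log 2))^{1/p}. -/

import Mathlib

open MeasureTheory ProbabilityTheory Real
open scoped ENNReal NNReal

noncomputable section

/-- An Orlicz function: convex, non-decreasing and non-negative on `[0, ∞)`, vanishing
at `0`, and not identically zero there. -/
def IsOrliczFunction (ψ : ℝ → ℝ) : Prop :=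
  ψ 0 = 0 ∧ ConvexOn ℝ (Set.Ici 0) ψ ∧ MonotoneOn ψ (Set.Ici 0) ∧
    (∀ x ∈ Set.Ici (0 : ℝ), 0 ≤ ψ x) ∧ ∃ x ∈ Set.Ici (0 : ℝ), ψ x ≠ 0

/-- The Orlicz norm `‖X‖_ψ = inf {B > 0 : E[ψ(|X|/B)] ≤ 1}`, with `inf ∅ = ∞`. -/
def orliczNorm {Ω : Type*} [MeasureSpace Ω] (ψ : ℝ → ℝ) (X : Ω → ℝ) : ℝ≥0∞ :=
  sInf {B : ℝ≥0∞ | ∃ b : ℝ, 0 < b ∧ B = ENNReal.ofReal b ∧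
    ∫⁻ ω, ENNReal.ofReal (ψ (|X ω| / b)) ∂(ℙ : Measure Ω) ≤ 1}

/-- The `ψ_p` quasi-norm of a real random variable:
`inf {B > 0 : E[exp((|X|/B)^p)] ≤ 2}`, with `inf ∅ = ∞`. -/
def psiNorm {Ω : Type*} [MeasureSpace Ω] (p : ℝ) (X : Ω → ℝ) : ℝ≥0∞ :=
  sInf {B : ℝ≥0∞ | ∃ b : ℝ, 0 < b ∧ B = ENNReal.ofReal b ∧
    ∫⁻ ω, ENNReal.ofReal (Real.exp ((|X ω| / b) ^ p)) ∂(ℙ : Measure Ω) ≤ 2}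

section Aux

open Set

/-- Monotonicity of `x ↦ x^p + log x * (p-1)` on `[a, ∞)` when `(1-p)/p ≤ a^p`. -/
lemma aux_rho_mono {p a : ℝ} (hp0 : 0 < p) (ha : 0 < a)
    (hap : (1 - p) / p ≤ a ^ p) :
    MonotoneOn (fun x : ℝ => x ^ p + Real.log x * (p - 1)) (Ici a) := by
  apply monotoneOn_of_deriv_nonneg (convex_Ici a)
  · apply ContinuousOn.add
    · exact fun x hx => (Real.continuousAt_rpow_const x p
        (Or.inl (ne_of_gt (lt_of_lt_of_le ha hx)))).continuousWithinAt
    · exact ((Real.continuousOn_log.mono (fun x hx => ne_of_gt (lt_of_lt_of_le ha hx))).mul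
        continuousOn_const)
  · intro x hx
    rw [interior_Ici] at hx
    have hx0 : 0 < x := lt_trans ha hx
    exact (((Real.hasDerivAt_rpow_const (p := p) (Or.inl hx0.ne')).add
      ((Real.hasDerivAt_log hx0.ne').mul_const (p - 1))).differentiableAt).differentiableWithinAt
  · intro x hx
    rw [interior_Ici] at hx
    have hx0 : 0 < x := lt_trans ha hx
    have hd : HasDerivAt (fun x : ℝ => x ^ p + Real.log x * (p - 1))
        (p * x ^ (p - 1) + x⁻¹ * (p - 1)) x :=
      (Real.hasDerivAt_rpow_const (p := p) (Or.inl hx0.ne')).add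
        ((Real.hasDerivAt_log hx0.ne').mul_const (p - 1))
    rw [hd.deriv]
    have hxp : a ^ p ≤ x ^ p := Real.rpow_le_rpow ha.le hx.le hp0.le
    have hxe : x ^ (p - 1) = x ^ p / x := by
      rw [Real.rpow_sub hx0, Real.rpow_one]
    rw [hxe, div_eq_mul_inv]
    have h1 : 1 - p ≤ p * x ^ p := by
      have h2 : (1 - p) / p ≤ x ^ p := le_trans hap hxp
      calc 1 - p = p * ((1 - p) / p) := by field_simp
        _ ≤ p * x ^ p := mul_le_mul_of_nonneg_left h2 hp0.le
    have hxi : 0 < x⁻¹ := inv_pos.2 hx0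
    nlinarith [hxi.le]

/-- Convexity of `x ↦ exp (x^p)` on `[a, ∞)`. -/
lemma aux_exp_rpow_convex {p a : ℝ} (hp0 : 0 < p) (ha : 0 < a)
    (hap : (1 - p) / p ≤ a ^ p) :
    ConvexOn ℝ (Ici a) (fun x : ℝ => Real.exp (x ^ p)) := by
  apply MonotoneOn.convexOn_of_deriv (convex_Ici a)
  · exact Real.continuous_exp.comp_continuousOn
      (fun x hx => (Real.continuousAt_rpow_const x p
        (Or.inl (ne_of_gt (lt_of_lt_of_le ha hx)))).continuousWithinAt)
  · intro x hx
    rw [interior_Ici] at hx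
    have hx0 : 0 < x := lt_trans ha hx
    exact ((Real.hasDerivAt_rpow_const (p := p)
      (Or.inl hx0.ne')).exp).differentiableAt.differentiableWithinAt
  · rw [interior_Ici]
    intro x hx y hy hxy
    have hx0 : 0 < x := lt_trans ha hx
    have hy0 : 0 < y := lt_trans ha hy
    have dx : deriv (fun x : ℝ => Real.exp (x ^ p)) x = Real.exp (x ^ p) * (p * x ^ (p-1)) :=
      ((Real.hasDerivAt_rpow_const (p := p) (Or.inl hx0.ne')).exp).deriv
    have dy : deriv (fun x : ℝ => Real.exp (x ^ p)) y = Real.exp (y ^ p) * (p * y ^ (p-1)) :=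
      ((Real.hasDerivAt_rpow_const (p := p) (Or.inl hy0.ne')).exp).deriv
    rw [dx, dy]
    have ex : Real.exp (x ^ p) * (p * x ^ (p-1)) = p * Real.exp (x ^ p + Real.log x * (p-1)) := by
      rw [Real.exp_add, Real.rpow_def_of_pos hx0 (p-1)]; ring
    have ey : Real.exp (y ^ p) * (p * y ^ (p-1)) = p * Real.exp (y ^ p + Real.log y * (p-1)) := by
      rw [Real.exp_add, Real.rpow_def_of_pos hy0 (p-1)]; ring
    rw [ex, ey]
    have := aux_rho_mono hp0 ha hap (Set.mem_Ici.2 (le_of_lt (Set.mem_Ioi.1 hx))) (Set.mem_Ici.2 (le_of_lt (Set.mem_Ioi.1 hy))) hxy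
    exact mul_le_mul_of_nonneg_left (Real.exp_le_exp.2 this) hp0.le

/-- The glued function is convex on `[0,∞)`. -/
lemma aux_psi_convex {p v : ℝ} (hp0 : 0 < p) (hv0 : 0 < v)
    (hvp : (1 - p) / p ≤ v) :
    ConvexOn ℝ (Ici (0:ℝ)) (fun x : ℝ => max (Real.exp (x ^ p) - Real.exp v) 0) := by
  set a := v ^ (1/p) with ha_def
  have ha : 0 < a := Real.rpow_pos_of_pos hv0 _
  have hav : a ^ p = v := by
    rw [ha_def, one_div, Real.rpow_inv_rpow hv0.le hp0.ne']
  have hconv : ConvexOn ℝ (Ici a) (fun x : ℝ => Real.exp (x ^ p)) :=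
    aux_exp_rpow_convex hp0 ha (hav ▸ hvp)
  have hg : ConvexOn ℝ (Ici a) (fun x : ℝ => Real.exp (x ^ p) - Real.exp v) :=
    (hconv.add_const (-Real.exp v)).congr (fun x _ => by simp [sub_eq_add_neg])
  have hgmono : MonotoneOn (fun x : ℝ => Real.exp (x ^ p) - Real.exp v) (Ici (0:ℝ)) := by
    intro x hx y hy hxy
    have h : x ^ p ≤ y ^ p := Real.rpow_le_rpow hx hxy hp0.le
    simpa using Real.exp_le_exp.2 h
  have himg : (fun x : ℝ => max x a) '' (Ici 0) = Ici a := by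
    apply subset_antisymm
    · rintro z ⟨w, _, rfl⟩; simpa using le_max_right w a
    · intro z hz
      exact ⟨z, le_trans ha.le hz, max_eq_left hz⟩
  have hcomp : ConvexOn ℝ (Ici (0:ℝ))
      ((fun x : ℝ => Real.exp (x ^ p) - Real.exp v) ∘ (fun x : ℝ => max x a)) := by
    apply ConvexOn.comp
    · rw [himg]; exact hg
    · exact (convexOn_id (convex_Ici 0)).sup (convexOn_const _ (convex_Ici 0))
    · rw [himg]; exact hgmono.mono (fun x hx => le_trans ha.le hx)
  apply hcomp.congr
  intro x hx
  simp only [Function.comp]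
  rcases le_total x a with hxa | hxa
  · rw [max_eq_right hxa]
    have h1 : x ^ p ≤ v := by
      rw [← hav]; exact Real.rpow_le_rpow hx hxa hp0.le
    have h2 : Real.exp (x ^ p) - Real.exp v ≤ 0 := by
      simp [Real.exp_le_exp.2 h1]
    rw [hav, sub_self, max_eq_right h2]
  · rw [max_eq_left hxa]
    have h1 : v ≤ x ^ p := by
      rw [← hav]; exact Real.rpow_le_rpow ha.le hxa hp0.le
    have h2 : 0 ≤ Real.exp (x ^ p) - Real.exp v := by
      simp [Real.exp_le_exp.2 h1]
    rw [max_eq_left h2]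

/-- Key chord inequality. -/
lemma aux_chord {c v u : ℝ} (hc0 : 0 ≤ c) (hc1 : c ≤ 1) (h : v ≤ u) :
    Real.exp (c * u) ≤ Real.exp (c * v) +
      c * Real.exp ((c - 1) * v) * (Real.exp u - Real.exp v) := by
  have key : Real.exp (c * (u - v)) ≤ 1 + c * (Real.exp (u - v) - 1) := by
    have hcvx := convexOn_exp.2 (Set.mem_univ (0:ℝ)) (Set.mem_univ (u - v))
      (show (0:ℝ) ≤ 1 - c by linarith) hc0 (show (1 - c) + c = 1 by ring)
    have h2 : rexp (c * (u - v)) ≤ 1 - c + c * rexp (u - v) := by simpa using hcvx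
    linarith
  have e1 : Real.exp (c * u) = Real.exp (c * v) * Real.exp (c * (u - v)) := by
    rw [← Real.exp_add]; ring_nf
  have e2 : Real.exp u = Real.exp v * Real.exp (u - v) := by
    rw [← Real.exp_add]; ring_nf
  have e3 : Real.exp ((c - 1) * v) * Real.exp v = Real.exp (c * v) := by
    rw [← Real.exp_add]; ring_nf
  have hA : 0 < Real.exp (c * v) := Real.exp_pos _
  calc Real.exp (c * u) = Real.exp (c * v) * Real.exp (c * (u - v)) := e1
    _ ≤ Real.exp (c * v) * (1 + c * (Real.exp (u - v) - 1)) :=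
        mul_le_mul_of_nonneg_left key hA.le
    _ = Real.exp (c * v) + c * Real.exp ((c - 1) * v) * (Real.exp u - Real.exp v) := by
        rw [e2, ← e3]; ring

/-- Pointwise bound with the max. -/
lemma aux_pointwise {c v u : ℝ} (hc0 : 0 ≤ c) (hc1 : c ≤ 1) :
    Real.exp (c * u) ≤ Real.exp (c * v) +
      c * Real.exp ((c - 1) * v) * max (Real.exp u - Real.exp v) 0 := by
  rcases le_total u v with h | h
  · have h1 : Real.exp (c * u) ≤ Real.exp (c * v) :=
      Real.exp_le_exp.2 (mul_le_mul_of_nonneg_left h hc0)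
    have h2 : 0 ≤ c * Real.exp ((c - 1) * v) * max (Real.exp u - Real.exp v) 0 := by
      positivity
    linarith
  · rw [max_eq_left (by simp [Real.exp_le_exp.2 h])]
    exact aux_chord hc0 hc1 h

lemma aux_exp_inv_bounds : 0.3678794 ≤ Real.exp (-1) ∧ Real.exp (-1) ≤ 0.3678795 := by
  have h1 : (2.7182818283 : ℝ) < Real.exp 1 := Real.exp_one_gt_d9
  have h2 : Real.exp 1 < 2.7182818286 := Real.exp_one_lt_d9
  have h3 : Real.exp (-1) = (Real.exp 1)⁻¹ := by rw [Real.exp_neg]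
  have hp : (0:ℝ) < Real.exp 1 := Real.exp_pos 1
  constructor
  · rw [h3, le_inv_comm₀ (by norm_num) hp]
    nlinarith
  · rw [h3, inv_le_comm₀ hp (by norm_num)]
    nlinarith

lemma aux_exp_upper {t : ℝ} (h0 : 0 ≤ t) (h1 : t ≤ 0.255) : Real.exp t ≤ 1.314 := by
  have h2 : Real.exp t * Real.exp (-(t/2)) * Real.exp (-(t/2)) = 1 := by
    rw [← Real.exp_add, ← Real.exp_add, show t + -(t/2) + -(t/2) = 0 by ring]
    exact Real.exp_zero
  have h3 : 1 - t/2 ≤ Real.exp (-(t/2)) := by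
    have := Real.add_one_le_exp (-(t/2)); linarith
  have h4 : (0:ℝ) < 1 - t/2 := by linarith
  have h5 : (1 - t/2) * (1 - t/2) ≤ Real.exp (-(t/2)) * Real.exp (-(t/2)) :=
    mul_le_mul h3 h3 h4.le (Real.exp_pos _).le
  have h6 : 0 < Real.exp t := Real.exp_pos t
  nlinarith [h5, h6, h2]

lemma aux_exp_lower_neg {y : ℝ} (h0 : 0.3678794 ≤ y) : Real.exp (-y) ≤ 0.7135 := by
  have h2 : Real.exp (-y) * Real.exp (y/2) * Real.exp (y/2) = 1 := by
    rw [← Real.exp_add, ← Real.exp_add]; ring_nf; exact Real.exp_zero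
  have h3 : 1 + y/2 ≤ Real.exp (y/2) := by
    have := Real.add_one_le_exp (y/2); linarith
  have h4 : (0:ℝ) < 1 + y/2 := by linarith
  have h5 : (1 + y/2) * (1 + y/2) ≤ Real.exp (y/2) * Real.exp (y/2) :=
    mul_le_mul h3 h3 h4.le (Real.exp_pos _).le
  nlinarith [Real.exp_pos (-y), h2, h5]

/-- The main numeric estimate. -/
lemma aux_numeric {p : ℝ} (hp0 : 0 < p) (hp1 : p < 1) :
    Real.exp ((p * Real.log 2 * Real.exp (p-1)) * (Real.exp (-p) / p)) +
      (p * Real.log 2 * Real.exp (p-1)) *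
        Real.exp (((p * Real.log 2 * Real.exp (p-1)) - 1) * (Real.exp (-p) / p)) ≤ 2 := by
  set L := Real.log 2 with hL
  set c := p * L * Real.exp (p-1) with hc
  set v := Real.exp (-p) / p with hv
  have hL1 : L < 0.6931471808 := Real.log_two_lt_d9
  have hL0 : 0.6931471803 < L := Real.log_two_gt_d9
  have hvpos : 0 < v := by positivity
  have hcpos : 0 < c := by positivity
  have hcv : c * v = L * Real.exp (-1) := by
    rw [hc, hv]
    rw [div_eq_mul_inv, show p * L * Real.exp (p-1) * (Real.exp (-p) * p⁻¹)
      = L * (Real.exp (p-1) * Real.exp (-p)) * (p * p⁻¹) by ring,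
      mul_inv_cancel₀ hp0.ne', ← Real.exp_add, show p - 1 + -p = -1 by ring, mul_one]
  obtain ⟨hei1, hei2⟩ := aux_exp_inv_bounds
  have ht0 : 0 ≤ c * v := by positivity
  have ht1 : c * v ≤ 0.255 := by
    rw [hcv]; nlinarith
  have hecv : Real.exp (c * v) ≤ 1.314 := aux_exp_upper ht0 ht1
  have hcle : c ≤ L := by
    rw [hc]
    have h1 : Real.exp (p - 1) ≤ 1 := Real.exp_le_one_iff.2 (by linarith)
    have h2 : p * Real.exp (p - 1) ≤ 1 := by nlinarith [Real.exp_pos (p-1)]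
    have hL0' : (0:ℝ) < L := by linarith
    nlinarith
  have hv1 : Real.exp (-1) ≤ v := by
    rw [hv]
    have h1 : Real.exp (-1) ≤ Real.exp (-p) := Real.exp_le_exp.2 (by linarith)
    rw [le_div_iff₀ hp0]
    nlinarith [Real.exp_pos (-p)]
  have hev : Real.exp (-v) ≤ 0.7135 := aux_exp_lower_neg (le_trans hei1 hv1)
  have hsplit : Real.exp ((c - 1) * v) = Real.exp (c * v) * Real.exp (-v) := by
    rw [← Real.exp_add]; ring_nf
  rw [hsplit]
  have hb : c * (Real.exp (c*v) * Real.exp (-v)) ≤ 0.6931471808 * (1.314 * 0.7135) := by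
    apply mul_le_mul (by linarith) _ (by positivity) (by norm_num)
    exact mul_le_mul hecv hev (Real.exp_pos _).le (by norm_num)
  nlinarith

end Aux

/-- for `p ≥ 1` the function `x ↦ exp(x^p) − 1` is an Orlicz function, and
for `0 < p < 1` the `ψ_p` quasi-norm is equivalent to an Orlicz norm with constant
`C_{ψ_p} = e⁻¹ (e / (p log 2))^{1/p}`. -/
theorem psi_p_quasinorm_equivalent_orlicz :
    (∀ p : ℝ, 1 ≤ p → IsOrliczFunction (fun x => Real.exp (x ^ p) - 1)) ∧
    (∀ p : ℝ, 0 < p → p < 1 →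
      ∃ ψ : ℝ → ℝ, IsOrliczFunction ψ ∧
        ∀ (Ω : Type) [MeasureSpace Ω] [IsProbabilityMeasure (ℙ : Measure Ω)],
        ∀ X : Ω → ℝ, Measurable X →
          orliczNorm ψ X ≤ psiNorm p X ∧
          psiNorm p X ≤
            ENNReal.ofReal
                (Real.exp (-1) * (Real.exp 1 / (p * Real.log 2)) ^ ((1 : ℝ) / p)) *
              orliczNorm ψ X) := by
  constructor
  · -- Part 1 : p ≥ 1
    intro p hp
    have hp0 : (0:ℝ) < p := by linarith
    refine ⟨?_, ?_, ?_, ?_, ?_⟩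
    · simp [Real.zero_rpow hp0.ne']
    · -- convexity
      have himg : (fun x : ℝ => x ^ p) '' (Set.Ici 0) = Set.Ici 0 := by
        apply subset_antisymm
        · rintro z ⟨w, hw, rfl⟩
          exact Real.rpow_nonneg hw p
        · intro z hz
          refine ⟨z ^ (1/p : ℝ), Real.rpow_nonneg hz _, ?_⟩
          show (z ^ ((1:ℝ)/p)) ^ p = z
          rw [one_div, Real.rpow_inv_rpow hz hp0.ne']
      have hcomp : ConvexOn ℝ (Set.Ici 0) (Real.exp ∘ fun x : ℝ => x ^ p) := by
        apply ConvexOn.comp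
        · rw [himg]; exact convexOn_exp.subset (Set.subset_univ _) (convex_Ici 0)
        · exact convexOn_rpow hp
        · rw [himg]; exact Real.exp_monotone.monotoneOn _
      exact (hcomp.add_const (-1)).congr (fun x _ => by simp [sub_eq_add_neg])
    · intro x hx y hy hxy
      have h : x ^ p ≤ y ^ p := Real.rpow_le_rpow hx hxy hp0.le
      simpa using Real.exp_le_exp.2 h
    · intro x hx
      have : (1:ℝ) ≤ Real.exp (x ^ p) := Real.one_le_exp (Real.rpow_nonneg hx p)
      simpa using this
    · refine ⟨1, by norm_num, ?_⟩
      show Real.exp ((1:ℝ) ^ p) - 1 ≠ 0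
      rw [Real.one_rpow]
      have := Real.exp_one_gt_d9
      intro hcon
      nlinarith
  · -- Part 2 : 0 < p < 1
    intro p hp0 hp1
    set L := Real.log 2 with hLdef
    have hL0 : (0:ℝ) < L := Real.log_pos one_lt_two
    have hL1 : L < 1 := by
      have := Real.log_two_lt_d9; rw [hLdef]; linarith
    set v : ℝ := Real.exp (-p) / p with hvdef
    have hv0 : 0 < v := by positivity
    set c : ℝ := p * L * Real.exp (p - 1) with hcdef
    have hc0 : 0 < c := by positivity
    have hc1 : c ≤ 1 := by
      have h1 : Real.exp (p - 1) ≤ 1 := Real.exp_le_one_iff.2 (by linarith)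
      have h2 : p * Real.exp (p - 1) ≤ 1 := by nlinarith [Real.exp_pos (p-1)]
      rw [hcdef]
      nlinarith
    have hvp : (1 - p) / p ≤ v := by
      have hexp : 1 - p ≤ Real.exp (-p) := by linarith [Real.add_one_le_exp (-p)]
      rw [hvdef]
      gcongr
    set ψ : ℝ → ℝ := fun x => max (Real.exp (x ^ p) - Real.exp v) 0 with hψdef
    set C : ℝ := Real.exp (-1) * (Real.exp 1 / (p * L)) ^ ((1:ℝ) / p) with hCdef
    have hC0 : 0 < C := by
      apply mul_pos (Real.exp_pos _)
      exact Real.rpow_pos_of_pos (div_pos (Real.exp_pos 1) (mul_pos hp0 hL0)) _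
    have hCp : C ^ p = Real.exp (-p) * (Real.exp 1 / (p * L)) := by
      rw [hCdef, Real.mul_rpow (Real.exp_pos _).le
        (Real.rpow_nonneg (by positivity) _), one_div,
        Real.rpow_inv_rpow (by positivity) hp0.ne']
      congr 1
      rw [Real.rpow_def_of_pos (Real.exp_pos _), Real.log_exp]
      norm_num
    have hcC : c * C ^ p = 1 := by
      rw [hCp, hcdef]
      have hex : Real.exp (p - 1) * (Real.exp (-p) * Real.exp 1) = 1 := by
        rw [← Real.exp_add, ← Real.exp_add, show p - 1 + (-p + 1) = 0 by ring]
        exact Real.exp_zero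
      field_simp
      linear_combination hex
    have hCpinv : C ^ p = c⁻¹ := by
      field_simp at hcC ⊢
      linarith [hcC]
    -- the Orlicz property
    have hOrlicz : IsOrliczFunction ψ := by
      refine ⟨?_, aux_psi_convex hp0 hv0 hvp, ?_, ?_, ?_⟩
      · rw [hψdef]
        simp only [Real.zero_rpow hp0.ne', Real.exp_zero]
        rw [max_eq_right]
        have : (1:ℝ) ≤ Real.exp v := Real.one_le_exp hv0.le
        linarith
      · intro x hx y hy hxy
        have h : x ^ p ≤ y ^ p := Real.rpow_le_rpow hx hxy hp0.le
        have := Real.exp_le_exp.2 h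
        exact max_le_max (by linarith) le_rfl
      · intro x _
        exact le_max_right _ _
      · refine ⟨(v + 1) ^ ((1:ℝ)/p), Real.rpow_nonneg (by positivity) _, ?_⟩
        rw [hψdef]
        simp only
        rw [one_div, Real.rpow_inv_rpow (by positivity) hp0.ne']
        have h1 : Real.exp v < Real.exp (v + 1) := Real.exp_lt_exp.2 (by linarith)
        rw [max_eq_left (by linarith)]
        intro hcon
        linarith [sub_eq_zero.1 hcon ▸ h1]  -- may fail; fix later
    refine ⟨ψ, hOrlicz, ?_⟩
    intro Ω _ _ X hX
    constructor
    · -- orliczNorm ψ X ≤ psiNorm p X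
      apply sInf_le_sInf
      rintro B ⟨b, hb, hBeq, hint⟩
      refine ⟨b, hb, hBeq, ?_⟩
      have hmeas : Measurable fun ω => ENNReal.ofReal (Real.exp ((|X ω| / b) ^ p)) :=
        ((Real.continuous_exp.comp (Real.continuous_rpow_const hp0.le)).measurable.comp
          ((hX.abs).div_const b)).ennreal_ofReal
      have hone : (fun _ : Ω => (1:ℝ≥0∞)) ≤ fun ω => ENNReal.ofReal (Real.exp ((|X ω| / b) ^ p)) := by
        intro ω
        rw [← ENNReal.ofReal_one]
        exact ENNReal.ofReal_le_ofReal
          (Real.one_le_exp (Real.rpow_nonneg (by positivity) p))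
      calc ∫⁻ ω, ENNReal.ofReal (ψ (|X ω| / b)) ∂(ℙ : Measure Ω)
          ≤ ∫⁻ ω, (ENNReal.ofReal (Real.exp ((|X ω| / b) ^ p)) - 1) ∂(ℙ : Measure Ω) := by
            apply lintegral_mono
            intro ω
            have hy : (0:ℝ) ≤ |X ω| / b := by positivity
            have h1 : ψ (|X ω| / b) ≤ Real.exp ((|X ω| / b) ^ p) - 1 := by
              rw [hψdef]
              apply max_le
              · have : (1:ℝ) ≤ Real.exp v := Real.one_le_exp hv0.le
                linarith
              · have : (1:ℝ) ≤ Real.exp ((|X ω| / b) ^ p) :=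
                  Real.one_le_exp (Real.rpow_nonneg hy p)
                linarith
            calc ENNReal.ofReal (ψ (|X ω| / b))
                ≤ ENNReal.ofReal (Real.exp ((|X ω| / b) ^ p) - 1) :=
                  ENNReal.ofReal_le_ofReal h1
              _ = ENNReal.ofReal (Real.exp ((|X ω| / b) ^ p)) - 1 := by
                  rw [ENNReal.ofReal_sub _ zero_le_one, ENNReal.ofReal_one]
        _ = (∫⁻ ω, ENNReal.ofReal (Real.exp ((|X ω| / b) ^ p)) ∂(ℙ : Measure Ω)) - 1 := by
            have := lintegral_sub (f := fun ω => ENNReal.ofReal (Real.exp ((|X ω| / b) ^ p)))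
              (g := fun _ => (1:ℝ≥0∞)) (μ := (ℙ : Measure Ω)) measurable_const
              (by simp) (Filter.Eventually.of_forall hone)
            simpa using this
        _ ≤ 1 := by
            rw [tsub_le_iff_right]
            exact le_trans hint (by norm_num)
    · -- psiNorm p X ≤ ofReal C * orliczNorm ψ X
      set S := {B : ℝ≥0∞ | ∃ b : ℝ, 0 < b ∧ B = ENNReal.ofReal b ∧
        ∫⁻ ω, ENNReal.ofReal (ψ (|X ω| / b)) ∂(ℙ : Measure Ω) ≤ 1} with hSdef
      have hknz : ENNReal.ofReal C ≠ 0 := ne_of_gt (ENNReal.ofReal_pos.2 hC0)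
      have hktop : ENNReal.ofReal C ≠ ⊤ := ENNReal.ofReal_ne_top
      -- key: membership transfer
      have hkey : ∀ b : ℝ, 0 < b →
          (∫⁻ ω, ENNReal.ofReal (ψ (|X ω| / b)) ∂(ℙ : Measure Ω) ≤ 1) →
          ∫⁻ ω, ENNReal.ofReal (Real.exp ((|X ω| / (C * b)) ^ p)) ∂(ℙ : Measure Ω) ≤ 2 := by
        intro b hb hint
        set K : ℝ := c * Real.exp ((c - 1) * v) with hKdef
        have hK0 : 0 ≤ K := by positivity
        have hpt : ∀ ω, ENNReal.ofReal (Real.exp ((|X ω| / (C * b)) ^ p)) ≤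
            ENNReal.ofReal (Real.exp (c * v)) +
              ENNReal.ofReal K * ENNReal.ofReal (ψ (|X ω| / b)) := by
          intro ω
          have hy : (0:ℝ) ≤ |X ω| / b := by positivity
          have hdd : |X ω| / (C * b) = (|X ω| / b) / C := by
            rw [div_div, mul_comm]
          have hrp : (|X ω| / (C * b)) ^ p = c * (|X ω| / b) ^ p := by
            rw [hdd, Real.div_rpow hy hC0.le, hCpinv, div_eq_mul_inv, inv_inv, mul_comm]
          have hineq : Real.exp ((|X ω| / (C * b)) ^ p) ≤
              Real.exp (c * v) + K * ψ (|X ω| / b) := by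
            rw [hrp, hψdef]
            exact aux_pointwise hc0.le hc1
          calc ENNReal.ofReal (Real.exp ((|X ω| / (C * b)) ^ p))
              ≤ ENNReal.ofReal (Real.exp (c * v) + K * ψ (|X ω| / b)) :=
                ENNReal.ofReal_le_ofReal hineq
            _ = ENNReal.ofReal (Real.exp (c * v)) +
                  ENNReal.ofReal K * ENNReal.ofReal (ψ (|X ω| / b)) := by
                rw [ENNReal.ofReal_add (Real.exp_pos _).le
                  (mul_nonneg hK0 (le_max_right _ _)),
                  ENNReal.ofReal_mul hK0]
        calc ∫⁻ ω, ENNReal.ofReal (Real.exp ((|X ω| / (C * b)) ^ p)) ∂(ℙ : Measure Ω)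
            ≤ ∫⁻ ω, (ENNReal.ofReal (Real.exp (c * v)) +
                ENNReal.ofReal K * ENNReal.ofReal (ψ (|X ω| / b))) ∂(ℙ : Measure Ω) :=
              lintegral_mono hpt
          _ = ENNReal.ofReal (Real.exp (c * v)) +
                ENNReal.ofReal K * ∫⁻ ω, ENNReal.ofReal (ψ (|X ω| / b)) ∂(ℙ : Measure Ω) := by
              rw [lintegral_add_left measurable_const,
                lintegral_const_mul' _ _ ENNReal.ofReal_ne_top, lintegral_const,
                measure_univ, mul_one]
          _ ≤ ENNReal.ofReal (Real.exp (c * v)) + ENNReal.ofReal K * 1 := by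
              exact add_le_add_right (mul_le_mul_right hint _) _
          _ ≤ 2 := by
              rw [mul_one, ← ENNReal.ofReal_add (Real.exp_pos _).le hK0]
              rw [show (2:ℝ≥0∞) = ENNReal.ofReal 2 by norm_num]
              apply ENNReal.ofReal_le_ofReal
              rw [hKdef]
              exact aux_numeric hp0 hp1
      rcases Set.eq_empty_or_nonempty S with hS | hS
      · rw [show orliczNorm ψ X = sInf S from rfl, hS, _root_.sInf_empty,
          ENNReal.mul_top hknz]
        exact le_top
      · have hne : Nonempty S := hS.to_subtype
        rw [show orliczNorm ψ X = sInf S from rfl, sInf_eq_iInf',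
          ENNReal.mul_iInf_of_ne hknz hktop]
        apply le_iInf
        rintro ⟨B, hB⟩
        obtain ⟨b, hb, rfl, hint⟩ := hB
        apply sInf_le
        refine ⟨C * b, by positivity, ?_, hkey b hb hint⟩
        rw [ENNReal.ofReal_mul hC0.le]
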